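/- For every real number x ≠ 0, 2·cosh(x) − (cosh x)⁻¹ − (cosh x)⁻³ − 3x · b₋₃(x) > 0, where b₋₃(x) = (1/2)[arctan(sinh x) + sinh(x)·(cosh x)⁻²]. -/

import Mathlib

open Real

noncomputable def bm3 (x : ℝ) : ℝ :=
  (1 / 2) * (Real.arctan (Real.sinh x) + Real.sinh x * (Real.cosh x)⁻¹ ^ 2)

noncomputable def Fm (x : ℝ) : ℝ :=
  2 * Real.cosh x - (Real.cosh x)⁻¹ - (Real.cosh x)⁻¹ ^ 3 - 3 * x * bm3 x

noncomputable def Fm' (x : ℝ) : ℝ :=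
  2 * Real.sinh x + Real.sinh x / Real.cosh x ^ 2 + 3 * Real.sinh x / Real.cosh x ^ 4
    - 3 * bm3 x - 3 * x / Real.cosh x ^ 3

noncomputable def Gm (x : ℝ) : ℝ :=
  9 * x * Real.sinh x / Real.cosh x ^ 4
    + Real.sinh x ^ 2 * (2 * Real.cosh x ^ 4 + Real.cosh x ^ 2 - 12) / Real.cosh x ^ 5

lemma cosh_ne (x : ℝ) : Real.cosh x ≠ 0 := (Real.cosh_pos x).ne'

lemma hasDerivAt_bm3 (x : ℝ) : HasDerivAt bm3 (1 / Real.cosh x ^ 3) x := by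
  have hc := cosh_ne x
  have h1 : HasDerivAt (fun y => Real.arctan (Real.sinh y))
      (1 / (1 + Real.sinh x ^ 2) * Real.cosh x) x :=
    (Real.hasDerivAt_sinh x).arctan
  have h2 : HasDerivAt (fun y => Real.sinh y * (Real.cosh y)⁻¹ ^ 2)
      (Real.cosh x * (Real.cosh x)⁻¹ ^ 2 +
        Real.sinh x * (2 * ((Real.cosh x)⁻¹) ^ 1 * (-Real.sinh x / Real.cosh x ^ 2))) x := by
    exact (Real.hasDerivAt_sinh x).mul
      (((Real.hasDerivAt_cosh x).inv hc).pow 2)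
  have h := ((h1.add h2).const_mul (1/2 : ℝ))
  refine HasDerivAt.congr_deriv h (Eq.symm ?_)
  have hs : 1 + Real.sinh x ^ 2 = Real.cosh x ^ 2 := (Real.cosh_sq' x).symm
  rw [hs]
  have h4 : Real.sinh x ^ 2 = Real.cosh x ^ 2 - 1 := (Real.sinh_sq x)
  field_simp
  linear_combination 2 * h4

lemma hasDerivAt_Fm (x : ℝ) : HasDerivAt Fm (Fm' x) x := by
  have hc := cosh_ne x
  have h1 : HasDerivAt (fun y => 2 * Real.cosh y) (2 * Real.sinh x) x :=
    (Real.hasDerivAt_cosh x).const_mul 2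
  have h2 : HasDerivAt (fun y => (Real.cosh y)⁻¹) (-Real.sinh x / Real.cosh x ^ 2) x :=
    (Real.hasDerivAt_cosh x).inv hc
  have h3 : HasDerivAt (fun y => (Real.cosh y)⁻¹ ^ 3)
      (3 * ((Real.cosh x)⁻¹) ^ 2 * (-Real.sinh x / Real.cosh x ^ 2)) x := h2.pow 3
  have h4 : HasDerivAt (fun y => 3 * y * bm3 y)
      (3 * bm3 x + (3 * x) * (1 / Real.cosh x ^ 3)) x := by
    have := ((hasDerivAt_id x).const_mul (3:ℝ)).mul (hasDerivAt_bm3 x)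
    exact this.congr_deriv (by simp only [id_eq, mul_one])
  have h := ((h1.sub h2).sub h3).sub h4
  refine HasDerivAt.congr_deriv h (Eq.symm ?_)
  unfold Fm'
  field_simp
  ring

lemma hasDerivAt_Fm' (x : ℝ) : HasDerivAt Fm' (Gm x) x := by
  have hc := cosh_ne x
  have h1 : HasDerivAt (fun y => 2 * Real.sinh y) (2 * Real.cosh x) x :=
    (Real.hasDerivAt_sinh x).const_mul 2
  have hcp : HasDerivAt (fun y => Real.cosh y ^ 2)
      (2 * Real.cosh x ^ 1 * Real.sinh x) x := (Real.hasDerivAt_cosh x).pow 2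
  have hcp4 : HasDerivAt (fun y => Real.cosh y ^ 4)
      (4 * Real.cosh x ^ 3 * Real.sinh x) x := (Real.hasDerivAt_cosh x).pow 4
  have hcp3 : HasDerivAt (fun y => Real.cosh y ^ 3)
      (3 * Real.cosh x ^ 2 * Real.sinh x) x := (Real.hasDerivAt_cosh x).pow 3
  have h2 : HasDerivAt (fun y => Real.sinh y / Real.cosh y ^ 2)
      ((Real.cosh x * Real.cosh x ^ 2 - Real.sinh x * (2 * Real.cosh x ^ 1 * Real.sinh x))
        / (Real.cosh x ^ 2) ^ 2) x :=
    (Real.hasDerivAt_sinh x).div hcp (pow_ne_zero 2 hc)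
  have h3 : HasDerivAt (fun y => 3 * Real.sinh y / Real.cosh y ^ 4)
      ((3 * Real.cosh x * Real.cosh x ^ 4 -
        3 * Real.sinh x * (4 * Real.cosh x ^ 3 * Real.sinh x)) / (Real.cosh x ^ 4) ^ 2) x := by
    have := (((Real.hasDerivAt_sinh x).const_mul (3:ℝ)).div hcp4 (pow_ne_zero 4 hc))
    exact this.congr_deriv (by ring)
  have h4 : HasDerivAt (fun y => 3 * bm3 y) (3 * (1 / Real.cosh x ^ 3)) x :=
    (hasDerivAt_bm3 x).const_mul 3
  have h5 : HasDerivAt (fun y => 3 * y / Real.cosh y ^ 3)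
      ((3 * Real.cosh x ^ 3 - 3 * x * (3 * Real.cosh x ^ 2 * Real.sinh x))
        / (Real.cosh x ^ 3) ^ 2) x := by
    have := ((hasDerivAt_id x).const_mul (3:ℝ)).div hcp3 (pow_ne_zero 3 hc)
    exact this.congr_deriv (by simp only [id_eq, mul_one])
  have h := (((h1.add h2).add h3).sub h4).sub h5
  refine HasDerivAt.congr_deriv h (Eq.symm ?_)
  unfold Gm
  have h4' : Real.sinh x ^ 2 = Real.cosh x ^ 2 - 1 := Real.sinh_sq x
  field_simp
  linear_combination (3 * Real.cosh x ^ 2 + 2 * Real.cosh x ^ 4) * h4'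

lemma sinh_lt_mul_cosh {x : ℝ} (hx : 0 < x) : Real.sinh x < x * Real.cosh x := by
  have key : StrictMonoOn (fun y => y * Real.cosh y - Real.sinh y) (Set.Ici 0) := by
    apply strictMonoOn_of_deriv_pos (convex_Ici 0)
    · fun_prop
    · intro y hy
      rw [interior_Ici] at hy
      have hd : HasDerivAt (fun y => y * Real.cosh y - Real.sinh y)
          (y * Real.sinh y) y := by
        have := ((hasDerivAt_id y).mul (Real.hasDerivAt_cosh y)).sub (Real.hasDerivAt_sinh y)
        refine HasDerivAt.congr_deriv this (Eq.symm ?_)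
        simp [id_eq]
      rw [hd.deriv]
      exact mul_pos hy (Real.sinh_pos_iff.mpr hy)
  have := key (Set.self_mem_Ici) (Set.mem_Ici.mpr hx.le) hx
  simpa using this

lemma Gm_pos {x : ℝ} (hx : 0 < x) : 0 < Gm x := by
  have hc : (0:ℝ) < Real.cosh x := Real.cosh_pos x
  have hs : 0 < Real.sinh x := Real.sinh_pos_iff.mpr hx
  have h1 : Real.sinh x * Real.sinh x < x * Real.cosh x * Real.sinh x := by
    nlinarith [sinh_lt_mul_cosh hx]
  have hc1 : 1 ≤ Real.cosh x := Real.one_le_cosh x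
  unfold Gm
  rw [div_add_div _ _ (by positivity) (by positivity)]
  apply div_pos _ (by positivity)
  have key : 9 * x * Real.sinh x * Real.cosh x ^ 5
      + Real.cosh x ^ 4 * (Real.sinh x ^ 2 * (2 * Real.cosh x ^ 4 + Real.cosh x ^ 2 - 12))
      = 9 * (x * Real.cosh x * Real.sinh x - Real.sinh x * Real.sinh x) * Real.cosh x ^ 4
        + (Real.sinh x ^ 2 * Real.cosh x ^ 4)
          * ((Real.cosh x ^ 2 - 1) * (2 * Real.cosh x ^ 2 + 3)) := by ring
  have t1 : 0 < 9 * (x * Real.cosh x * Real.sinh x - Real.sinh x * Real.sinh x)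
      * Real.cosh x ^ 4 := by
    apply mul_pos _ (by positivity)
    linarith
  have t2 : 0 ≤ (Real.sinh x ^ 2 * Real.cosh x ^ 4)
      * ((Real.cosh x ^ 2 - 1) * (2 * Real.cosh x ^ 2 + 3)) := by
    apply mul_nonneg (by positivity)
    apply mul_nonneg _ (by positivity)
    nlinarith
  nlinarith [key]

lemma bm3_zero : bm3 0 = 0 := by simp [bm3]

lemma Fm'_pos {x : ℝ} (hx : 0 < x) : 0 < Fm' x := by
  have key : StrictMonoOn Fm' (Set.Ici 0) := by
    apply strictMonoOn_of_deriv_pos (convex_Ici 0)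
    · exact (fun y _ => (hasDerivAt_Fm' y).differentiableAt.continuousAt.continuousWithinAt)
    · intro y hy
      rw [interior_Ici] at hy
      rw [(hasDerivAt_Fm' y).deriv]
      exact Gm_pos hy
  have := key (Set.self_mem_Ici) (Set.mem_Ici.mpr hx.le) hx
  simpa [Fm', bm3_zero] using this

lemma Fm_pos {x : ℝ} (hx : 0 < x) : 0 < Fm x := by
  have key : StrictMonoOn Fm (Set.Ici 0) := by
    apply strictMonoOn_of_deriv_pos (convex_Ici 0)
    · exact (fun y _ => (hasDerivAt_Fm y).differentiableAt.continuousAt.continuousWithinAt)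
    · intro y hy
      rw [interior_Ici] at hy
      rw [(hasDerivAt_Fm y).deriv]
      exact Fm'_pos hy
  have h := key (Set.self_mem_Ici) (Set.mem_Ici.mpr hx.le) hx
  have h0 : Fm 0 = 0 := by simp [Fm, bm3_zero]; norm_num
  linarith

lemma Fm_even (x : ℝ) : Fm (-x) = Fm x := by
  simp [Fm, bm3, Real.sinh_neg, Real.cosh_neg, Real.arctan_neg]
  ring

theorem stmt_1 (x : ℝ) (hx : x ≠ 0) :
    2 * Real.cosh x - (Real.cosh x)⁻¹ - (Real.cosh x)⁻¹ ^ 3 - 3 * x * bm3 x > 0 := by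
  have : 0 < Fm x := by
    rcases hx.lt_or_gt with h | h
    · have := Fm_pos (x := -x) (by linarith)
      rwa [Fm_even] at this
    · exact Fm_pos h
  unfold Fm at this
  linarith
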